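/- arXiv:1710.07792 — 3 statements merged into one kernel-verified Lean document; each statement's English description precedes it below -/
import Mathlib

section
/- Let H be a complex Hilbert space, let p ≥ 1, and let A₁,…,A_p be bounded linear operators on H. Let 𝒜 be the companion operator on the p-fold Hilbert-space product H^p defined by 𝒜(x₁,…,x_p) = (A₁x₁ + A₂x₂ + ⋯ + A_p x_p, x₁, x₂, …, x_{p−1}). Then for every z ∈ ℂ, the operator I_{H^p} − z·𝒜 is invertible in the Banach algebra of bounded operators on H^p if and only if the operator pencil A(z) = I_H − z·A₁ − z²·A₂ − ⋯ − z^p·A_p is invertible in the Banach algebra of bounded operators on H. -/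
set_option synthInstance.maxHeartbeats 1000000
set_option maxHeartbeats 1000000


open scoped ComplexOrder

private def compSeq (z : ℂ) {H : Type*} [AddCommGroup H] [Module ℂ H]
    (x0 : H) (y : ℕ → H) : ℕ → H
  | 0 => x0
  | n + 1 => z • compSeq z x0 y n + y (n + 1)

private lemma compSeq_split (z : ℂ) {H : Type*} [AddCommGroup H] [Module ℂ H]
    (x0 : H) (y : ℕ → H) (n : ℕ) :
    compSeq z x0 y n = z ^ n • x0 + compSeq z 0 y n := by
  induction n with
  | zero => simp [compSeq]
  | succ n ih =>
      simp only [compSeq, ih, smul_add, pow_succ, smul_smul]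
      rw [mul_comm]
      abel

private lemma compSeq_zero_of (z : ℂ) {H : Type*} [AddCommGroup H] [Module ℂ H]
    (y : ℕ → H) (hy : ∀ m, 1 ≤ m → y m = 0) (n : ℕ) :
    compSeq z 0 y n = 0 := by
  induction n with
  | zero => simp [compSeq]
  | succ n ih => simp [compSeq, ih, hy (n + 1) (Nat.le_add_left 1 n)]

/-- For bounded operators `A₁,…,A_p` on a complex Hilbert space `H` and the companion
operator `𝒜` on `H^p` (with `𝒜(x₁,…,x_p) = (Σᵢ Aᵢ xᵢ, x₁, …, x_{p-1})`), the operator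
`I - z𝒜` is invertible on `H^p` iff the pencil `A(z) = I - zA₁ - ⋯ - z^p A_p` is
invertible on `H`. -/
theorem stmt_3 {H : Type*} [NormedAddCommGroup H] [InnerProductSpace ℂ H]
    [CompleteSpace H] {p : ℕ} [NeZero p] (A : Fin p → H →L[ℂ] H)
    (𝒜 : PiLp 2 (fun _ : Fin p => H) →L[ℂ] PiLp 2 (fun _ : Fin p => H))
    (h𝒜0 : ∀ x : PiLp 2 (fun _ : Fin p => H), 𝒜 x 0 = ∑ i : Fin p, A i (x i))
    (h𝒜s : ∀ (x : PiLp 2 (fun _ : Fin p => H)) (i : Fin p), i ≠ 0 → 𝒜 x i = x (i - 1))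
    (z : ℂ) :
    IsUnit ((1 : PiLp 2 (fun _ : Fin p => H) →L[ℂ] PiLp 2 (fun _ : Fin p => H)) - z • 𝒜) ↔
      IsUnit ((1 : H →L[ℂ] H) - ∑ i : Fin p, z ^ (i.val + 1) • A i) := by
  classical
  obtain ⟨q, rfl⟩ : ∃ q, p = q + 1 :=
    ⟨p - 1, (Nat.succ_pred_eq_of_pos (Nat.pos_of_ne_zero (NeZero.ne p))).symm⟩
  set X := PiLp 2 (fun _ : Fin (q + 1) => H) with hX
  set T : X →L[ℂ] X := 1 - z • 𝒜 with hT
  set S : H →L[ℂ] H := 1 - ∑ i : Fin (q + 1), z ^ (i.val + 1) • A i with hS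
  have hp : 0 < q + 1 := Nat.succ_pos q
  -- coordinate formulas for T
  have hT0 : ∀ x : X, T x 0 = x 0 - z • ∑ i : Fin (q + 1), A i (x i) := by
    intro x
    show x 0 - z • (𝒜 x 0) = _
    rw [h𝒜0]
  have hTs : ∀ (x : X) (i : Fin (q + 1)), i ≠ 0 → T x i = x i - z • x (i - 1) := by
    intro x i hi
    show x i - z • (𝒜 x i) = _
    rw [h𝒜s x i hi]
  -- S formula
  have hSapp : ∀ u : H, S u = u - ∑ i : Fin (q + 1), z ^ (i.val + 1) • A i u := by
    intro u
    simp [hS, ContinuousLinearMap.sub_apply, ContinuousLinearMap.sum_apply]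
  -- extension of y : X to ℕ → H
  let ext : X → ℕ → H := fun y n => if h : n < q + 1 then y ⟨n, h⟩ else 0
  let c : X → ℕ → H := fun y => compSeq z 0 (ext y)
  let w : X → H := fun y => y 0 + z • ∑ i : Fin (q + 1), A i (c y i.val)
  -- Fin facts
  have hfin0 : ∀ h : 0 < q + 1, (⟨0, h⟩ : Fin (q + 1)) = 0 := by
    intro h; ext; simp
  have hfinsub : ∀ (n : ℕ) (h : n + 1 < q + 1),
      ((⟨n + 1, h⟩ : Fin (q + 1)) - 1) = ⟨n, Nat.lt_of_succ_lt h⟩ := by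
    intro n h
    have h1 : ((⟨n, Nat.lt_of_succ_lt h⟩ : Fin (q + 1)) + 1) = ⟨n + 1, h⟩ := by
      ext
      rw [Fin.val_add_one_of_lt]
      · simp [Fin.lt_iff_val_lt_val, Fin.last]
        omega
    rw [← h1, add_sub_cancel_right]
  -- key forward lemma: if T x = y then coordinates follow compSeq
  have key1 : ∀ (x y : X), T x = y →
      ∀ (i : Fin (q + 1)), x i = compSeq z (x 0) (ext y) i.val := by
    intro x y hxy i
    obtain ⟨n, hn⟩ := i
    induction n with
    | zero =>
        show x ⟨0, hn⟩ = x 0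
        rw [hfin0 hn]
    | succ n ih =>
        have hne : (⟨n + 1, hn⟩ : Fin (q + 1)) ≠ 0 := by
          simp [Fin.ext_iff]
        have h1 : x ⟨n + 1, hn⟩ - z • x ((⟨n + 1, hn⟩ : Fin (q + 1)) - 1) = y ⟨n + 1, hn⟩ := by
          rw [← hTs x ⟨n + 1, hn⟩ hne, hxy]
        rw [hfinsub n hn] at h1
        have hx : x ⟨n + 1, hn⟩ = z • x ⟨n, Nat.lt_of_succ_lt hn⟩ + y ⟨n + 1, hn⟩ := by
          rw [← h1]; abel
        rw [hx, ih (Nat.lt_of_succ_lt hn)]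
        show _ = z • compSeq z (x 0) (ext y) n + ext y (n + 1)
        have he : ext y (n + 1) = y ⟨n + 1, hn⟩ := dif_pos hn
        rw [he]
  -- if T x = y then S (x 0) = w y
  have key2 : ∀ (x y : X), T x = y → S (x 0) = w y := by
    intro x y hxy
    have h0 : x 0 - z • ∑ i : Fin (q + 1), A i (x i) = y 0 := by
      rw [← hT0 x, hxy]
    have hxi : ∀ i : Fin (q + 1), x i = z ^ i.val • (x 0) + c y i.val := by
      intro i
      rw [key1 x y hxy i, compSeq_split]
    rw [hSapp]
    have hsum : ∑ i : Fin (q + 1), A i (x i)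
        = ∑ i : Fin (q + 1), (z ^ i.val • A i (x 0) + A i (c y i.val)) := by
      refine Finset.sum_congr rfl fun i _ => ?_
      rw [hxi i]; simp
    rw [hsum] at h0
    rw [Finset.sum_add_distrib, smul_add, Finset.smul_sum] at h0
    simp only [w]
    rw [← h0]
    have hz : ∑ i : Fin (q + 1), z ^ (i.val + 1) • A i (x 0)
        = ∑ i : Fin (q + 1), z • z ^ i.val • A i (x 0) := by
      refine Finset.sum_congr rfl fun i _ => ?_
      rw [smul_smul, ← pow_succ']
    rw [hz, ← Finset.smul_sum]
    abel
  -- converse: if S u = w y then the lifted x solves T x = y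
  have key3 : ∀ (u : H) (y : X), S u = w y →
      T (WithLp.toLp 2 (fun i => z ^ i.val • u + c y i.val : ∀ _ : Fin (q + 1), H) : X) = y := by
    intro u y hu
    set x : X := (WithLp.toLp 2 (fun i => z ^ i.val • u + c y i.val : ∀ _ : Fin (q + 1), H) : X) with hxdef
    have hx : ∀ i : Fin (q + 1), x i = z ^ i.val • u + c y i.val := fun i => rfl
    have hx0 : x 0 = u := by
      show z ^ (0 : Fin (q + 1)).val • u + c y (0 : Fin (q + 1)).val = u
      simp [c, compSeq]
    apply PiLp.ext; intro i
    by_cases hi : i = 0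
    · subst hi
      rw [hT0]
      have h1 : ∑ i : Fin (q + 1), A i (x i)
          = ∑ i : Fin (q + 1), (z ^ i.val • A i u + A i (c y i.val)) := by
        refine Finset.sum_congr rfl fun i _ => ?_
        rw [hx i]; simp
      rw [h1, hx0, Finset.sum_add_distrib, smul_add, Finset.smul_sum]
      have h2 : ∑ i : Fin (q + 1), z • z ^ i.val • A i u
          = ∑ i : Fin (q + 1), z ^ (i.val + 1) • A i u := by
        refine Finset.sum_congr rfl fun i _ => ?_
        rw [smul_smul, ← pow_succ']
      rw [h2]
      have h3 : u - ∑ i : Fin (q + 1), z ^ (i.val + 1) • A i u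
          = y 0 + z • ∑ i : Fin (q + 1), A i (c y i.val) := by
        rw [← hSapp, hu]
      rw [← sub_sub, h3]
      show y 0 + z • ∑ i : Fin (q + 1), A i (c y i.val)
          - z • ∑ i : Fin (q + 1), A i (c y i.val) = _
      abel
    · rw [hTs x i hi]
      obtain ⟨n, hn⟩ := i
      have hn0 : n ≠ 0 := by
        intro h; subst h; exact hi (hfin0 hn)
      obtain ⟨m, rfl⟩ := Nat.exists_eq_succ_of_ne_zero hn0
      rw [hfinsub m hn, hx, hx]
      show z ^ (m + 1) • u + c y (m + 1) - z • (z ^ m • u + c y m) = y ⟨m + 1, hn⟩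
      have hc : c y (m + 1) = z • c y m + ext y (m + 1) := rfl
      have he : ext y (m + 1) = y ⟨m + 1, hn⟩ := dif_pos hn
      rw [hc, he, smul_add, smul_smul, ← pow_succ']
      abel
  -- c of "only 0th coordinate nonzero" y is zero
  have hczero : ∀ y : X, (∀ i : Fin (q + 1), i ≠ 0 → y i = 0) → ∀ n, c y n = 0 := by
    intro y hy n
    refine compSeq_zero_of z (ext y) (fun m hm => ?_) n
    simp only [ext]
    split
    · rename_i h
      refine hy ⟨m, h⟩ ?_
      simp [Fin.ext_iff]
      omega
    · rfl
  have hzero0 : ((0 : X) : ∀ _ : Fin (q + 1), H) = fun _ => 0 := rfl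
  have hzX : ∀ i : Fin (q + 1), i ≠ 0 → (0 : X) i = 0 := fun _ _ => rfl
  have hz00 : (0 : X) 0 = (0 : H) := rfl
  haveI : CompleteSpace X :=
    inferInstanceAs (CompleteSpace (PiLp 2 (fun _ : Fin (q + 1) => H)))
  rw [ContinuousLinearMap.isUnit_iff_bijective, ContinuousLinearMap.isUnit_iff_bijective]
  constructor
  · rintro ⟨hTi, hTsur⟩
    constructor
    · -- S injective
      intro u v huv
      have h1 : S (u - v) = w 0 := by
        rw [map_sub, huv, sub_self]
        simp [w, hczero 0 hzX, hz00]
      have h3 := key3 (u - v) 0 h1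
      have h4 : (WithLp.toLp 2 (fun i => z ^ i.val • (u - v) + c 0 i.val : ∀ _ : Fin (q + 1), H) : X) = 0 := by
        apply hTi
        rw [h3, map_zero]
      have h5 : (WithLp.toLp 2 (fun i => z ^ i.val • (u - v) + c 0 i.val : ∀ _ : Fin (q + 1), H) : X) 0
          = (0 : X) 0 := by rw [h4]
      have h6 : z ^ (0 : Fin (q + 1)).val • (u - v) + c 0 (0 : Fin (q + 1)).val = 0 := h5
      simp only [hczero 0 hzX, Fin.val_zero, pow_zero, one_smul, add_zero] at h6
      exact sub_eq_zero.mp h6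
    · -- S surjective
      intro v
      set y : X := (WithLp.toLp 2 (fun i => if i = 0 then v else 0 : ∀ _ : Fin (q + 1), H) : X) with hy
      have hyz : ∀ i : Fin (q + 1), i ≠ 0 → y i = 0 := by
        intro i hi
        show (if i = 0 then v else 0) = 0
        rw [if_neg hi]
      obtain ⟨x, hx⟩ := hTsur y
      refine ⟨x 0, ?_⟩
      rw [key2 x y hx]
      have hy0 : y 0 = v := rfl
      simp [w, hczero y hyz, hy0]
  · rintro ⟨hSi, hSsur⟩
    constructor
    · -- T injective
      intro a b hab
      have hab' : T (a - b) = 0 := by rw [map_sub, hab, sub_self]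
      have h1 : S ((a - b) 0) = w 0 := key2 (a - b) 0 hab'
      have h2 : S ((a - b) 0) = S 0 := by
        rw [h1, map_zero]
        simp [w, hczero 0 hzX, hz00]
      have h3 : (a - b) 0 = 0 := hSi h2
      have h4 : a - b = 0 := by
        apply PiLp.ext; intro i
        have hc0 : compSeq z 0 (ext (0 : X)) i.val = 0 := hczero 0 hzX i.val
        rw [key1 (a - b) 0 hab' i, compSeq_split, h3, hc0]
        simp [show (0 : X) i = 0 from rfl]
      exact sub_eq_zero.mp h4
    · -- T surjective
      intro y
      obtain ⟨u, hu⟩ := hSsur (w y)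
      exact ⟨_, key3 u y hu⟩
end

section
/- Let H be a complex Hilbert space, let p ≥ 1, and let A₁,…,A_p be bounded linear operators on H, with companion operator 𝒜 on H^p defined by 𝒜(x₁,…,x_p) = (Σ_{i=1}^p A_i x_i, x₁, …, x_{p−1}). Suppose that for every z ∈ ℂ with |z| ≤ 1 the operator A(z) = I_H − z·A₁ − ⋯ − z^p·A_p is invertible (Assumption (S)). Then the spectral radius of 𝒜, i.e. sup{|w| : w belongs to the spectrum of 𝒜}, is strictly less than 1. -/
open scoped ENNReal NNReal
set_option synthInstance.maxHeartbeats 1000000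
set_option maxHeartbeats 4000000


instance auxCompl {ι : Type*} [Fintype ι] (p : ENNReal) [Fact (1 ≤ p)] (α : ι → Type*)
    [∀ i, NormedAddCommGroup (α i)] [∀ i, CompleteSpace (α i)] :
    CompleteSpace (PiLp p α) := inferInstance

theorem aux_spectralRadius_lt_one {A : Type*} [NormedRing A] [NormedAlgebra ℂ A]
    [CompleteSpace A] (a : A) (h : ∀ w ∈ spectrum ℂ a, ‖w‖ < 1) :
    spectralRadius ℂ a < 1 := by
  rcases (spectrum ℂ a).eq_empty_or_nonempty with hemp | hne
  · simp [spectralRadius, hemp]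
  · have hc : IsCompact (spectrum ℂ a) := spectrum.isCompact a
    obtain ⟨k, hk, hmax⟩ := hc.exists_isMaxOn hne continuous_norm.continuousOn
    have hk1 : ‖k‖ < 1 := h k hk
    rw [spectralRadius]
    calc (⨆ w ∈ spectrum ℂ a, (‖w‖₊ : ℝ≥0∞)) ≤ (‖k‖₊ : ℝ≥0∞) := by
          refine iSup₂_le fun w hw => ?_
          exact_mod_cast hmax hw
      _ < 1 := by exact_mod_cast hk1


/-- Under Assumption (S) — the operator pencil `A(z) = I - zA₁ - ⋯ - z^p A_p` is invertible
for all `|z| ≤ 1` — the spectral radius of the companion operator `𝒜` on `H^p` is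
strictly less than 1. -/
theorem stmt_4 {H : Type*} [NormedAddCommGroup H] [InnerProductSpace ℂ H]
    [CompleteSpace H] {p : ℕ} [NeZero p] (A : Fin p → H →L[ℂ] H)
    (𝒜 : PiLp 2 (fun _ : Fin p => H) →L[ℂ] PiLp 2 (fun _ : Fin p => H))
    (h𝒜0 : ∀ x : PiLp 2 (fun _ : Fin p => H), 𝒜 x 0 = ∑ i : Fin p, A i (x i))
    (h𝒜s : ∀ (x : PiLp 2 (fun _ : Fin p => H)) (i : Fin p), i ≠ 0 → 𝒜 x i = x (i - 1))
    (hS : ∀ z : ℂ, ‖z‖ ≤ 1 →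
      IsUnit ((1 : H →L[ℂ] H) - ∑ i : Fin p, z ^ (i.val + 1) • A i)) :
    spectralRadius ℂ 𝒜 < 1 := by
  obtain ⟨q, hq⟩ := Nat.exists_eq_succ_of_ne_zero (NeZero.ne p)
  subst hq
  set E := PiLp 2 (fun _ : Fin (q + 1) => H) with hE
  refine aux_spectralRadius_lt_one 𝒜 ?_
  intro w hw
  by_contra hnlt
  push_neg at hnlt
  have hw1 : 1 ≤ ‖w‖ := hnlt
  have hw0 : w ≠ 0 := by
    intro h
    rw [h, norm_zero] at hw1
    linarith
  set z := w⁻¹ with hzdef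
  have hzw : z * w = 1 := inv_mul_cancel₀ hw0
  have hwz : w * z = 1 := mul_inv_cancel₀ hw0
  have hz1 : ‖z‖ ≤ 1 := by
    rw [hzdef, norm_inv]
    exact inv_le_one_of_one_le₀ hw1
  obtain ⟨u, hu⟩ := hS z hz1
  rw [spectrum.mem_iff] at hw
  apply hw
  rw [ContinuousLinearMap.isUnit_iff_bijective]
  have hTapp : ∀ (x : E) (i : Fin (q + 1)),
      ((algebraMap ℂ (E →L[ℂ] E) w - 𝒜) x) i = w • x i - 𝒜 x i := by
    intro x i
    rw [ContinuousLinearMap.sub_apply, Algebra.algebraMap_eq_smul_one,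
      ContinuousLinearMap.smul_apply, ContinuousLinearMap.one_apply,
      PiLp.sub_apply, PiLp.smul_apply]
  set B : H →L[ℂ] H := ((u⁻¹ : (H →L[ℂ] H)ˣ) : H →L[ℂ] H) with hB
  have hBu : ∀ v : H,
      ((1 : H →L[ℂ] H) - ∑ i : Fin (q + 1), z ^ (i.val + 1) • A i) (B v) = v := by
    intro v
    rw [← hu, hB, ← ContinuousLinearMap.mul_apply, u.mul_inv,
      ContinuousLinearMap.one_apply]
  have huB : ∀ v : H,
      B (((1 : H →L[ℂ] H) - ∑ i : Fin (q + 1), z ^ (i.val + 1) • A i) v) = v := by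
    intro v
    rw [← hu, hB, ← ContinuousLinearMap.mul_apply, u.inv_mul,
      ContinuousLinearMap.one_apply]
  constructor
  · -- injectivity
    have hker : ∀ x : E, (algebraMap ℂ (E →L[ℂ] E) w - 𝒜) x = 0 → x = 0 := by
      intro x hx0
      have hxe : ∀ i : Fin (q + 1), 𝒜 x i = w • x i := by
        intro i
        have h1 : ((algebraMap ℂ (E →L[ℂ] E) w - 𝒜) x) i = (0 : E) i := by rw [hx0]
        rw [hTapp x i, PiLp.zero_apply] at h1
        have := sub_eq_zero.mp h1
        exact this.symm
      have hx : ∀ k (hk : k < q + 1), x ⟨k, hk⟩ = z ^ k • x 0 := by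
        intro k
        induction k with
        | zero =>
          intro hk
          simp [Fin.mk_zero]
        | succ k ih =>
          intro hk
          have hk' : k < q + 1 := Nat.lt_of_succ_lt hk
          have hnei : (⟨k + 1, hk⟩ : Fin (q + 1)) ≠ 0 := by
            simp [Fin.ext_iff]
          have h1 : (⟨k + 1, hk⟩ : Fin (q + 1)) - 1 = ⟨k, hk'⟩ := by
            apply Fin.ext
            rw [Fin.coe_sub_one, if_neg hnei]
            simp
          have h2 : w • x ⟨k + 1, hk⟩ = x ⟨k, hk'⟩ := by
            rw [← hxe ⟨k + 1, hk⟩, h𝒜s x _ hnei, h1]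
          calc x ⟨k + 1, hk⟩ = (z * w) • x ⟨k + 1, hk⟩ := by rw [hzw, one_smul]
            _ = z • (w • x ⟨k + 1, hk⟩) := by rw [mul_smul]
            _ = z • x ⟨k, hk'⟩ := by rw [h2]
            _ = z ^ (k + 1) • x 0 := by rw [ih hk', smul_smul, ← pow_succ']
      have h0 : w • x 0 = ∑ i : Fin (q + 1), z ^ i.val • A i (x 0) := by
        rw [← hxe 0, h𝒜0 x]
        refine Finset.sum_congr rfl fun i _ => ?_
        rw [show x i = z ^ i.val • x 0 by simpa using hx i.val i.isLt, map_smul]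
      have hU0 : ((1 : H →L[ℂ] H) - ∑ i : Fin (q + 1), z ^ (i.val + 1) • A i) (x 0)
          = 0 := by
        rw [ContinuousLinearMap.sub_apply, ContinuousLinearMap.one_apply,
          ContinuousLinearMap.sum_apply]
        have hs : ∑ i : Fin (q + 1), (z ^ (i.val + 1) • A i) (x 0)
            = z • (w • x 0) := by
          rw [h0, Finset.smul_sum]
          refine Finset.sum_congr rfl fun i _ => ?_
          rw [ContinuousLinearMap.smul_apply, smul_smul, ← pow_succ']
        rw [hs, smul_smul, hzw, one_smul, sub_self]
      have hx00 : x 0 = 0 := by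
        have := huB (x 0)
        rw [hU0, map_zero] at this
        exact this.symm
      refine PiLp.ext fun i => ?_
      have : x i = z ^ i.val • x 0 := by simpa using hx i.val i.isLt
      rw [this, hx00, smul_zero]
      rfl
    intro a b hab
    have := hker (a - b) (by rw [map_sub, hab, sub_self])
    exact sub_eq_zero.mp this
  · -- surjectivity
    intro y
    let g : ℕ → H := fun k =>
      Nat.rec 0 (fun k gk => z • (gk + (if h : k + 1 < q + 1 then y ⟨k + 1, h⟩ else 0))) k
    have hg0 : g 0 = 0 := rfl
    have hgs : ∀ k, g (k + 1)
        = z • (g k + (if h : k + 1 < q + 1 then y ⟨k + 1, h⟩ else 0)) := fun k => rfl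
    set S : H := ∑ i : Fin (q + 1), A i (g i.val) with hSdef
    set x0 : H := z • B (y 0 + S) with hx0def
    refine ⟨(WithLp.equiv 2 _).symm (fun i => z ^ i.val • x0 + g i.val), ?_⟩
    set x : E := (WithLp.equiv 2 _).symm (fun i => z ^ i.val • x0 + g i.val) with hxdef
    have hxi : ∀ i : Fin (q + 1), x i = z ^ i.val • x0 + g i.val := fun i => rfl
    refine PiLp.ext fun i => ?_
    rw [hTapp x i]
    by_cases hi : i = 0
    · subst hi
      rw [h𝒜0 x]
      have hx0c : x 0 = x0 := by
        rw [hxi 0]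
        simp [hg0]
      have e3 : w • x0 = B (y 0 + S) := by
        rw [hx0def, smul_smul, hwz, one_smul]
      have e4 : ∀ j : Fin (q + 1), A j (x j)
          = (z ^ (j.val + 1) • A j) (B (y 0 + S)) + A j (g j.val) := by
        intro j
        rw [hxi j, map_add, hx0def, map_smul, map_smul,
          ContinuousLinearMap.smul_apply, smul_smul, ← pow_succ]
      rw [Finset.sum_congr rfl fun j _ => e4 j, Finset.sum_add_distrib, ← hSdef,
        ← ContinuousLinearMap.sum_apply, hx0c, e3]
      have e7 := hBu (y 0 + S)
      rw [ContinuousLinearMap.sub_apply, ContinuousLinearMap.one_apply] at e7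
      rw [sub_add_eq_sub_sub, e7, add_sub_cancel_right]
    · rw [h𝒜s x i hi]
      have hvne : i.val ≠ 0 := fun h => hi (Fin.ext (by simp [h]))
      obtain ⟨k, hk⟩ := Nat.exists_eq_succ_of_ne_zero hvne
      have hilt : k + 1 < q + 1 := by have h2 := i.isLt; omega
      have hsub1 : (i - 1).val = k := by
        rw [Fin.coe_sub_one, if_neg hi, hk]
        omega
      have hieq : (⟨k + 1, hilt⟩ : Fin (q + 1)) = i := Fin.ext (by simp [hk])
      have e1 : w • (z ^ (k + 1) • x0) = z ^ k • x0 := by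
        rw [smul_smul, pow_succ', ← mul_assoc, hwz, one_mul]
      have e2 : w • g (k + 1) = g k + y i := by
        rw [hgs, smul_smul, hwz, one_smul, dif_pos hilt, hieq]
      rw [hxi i, hxi (i - 1), hsub1, hk, smul_add, e1, e2]
      abel
end

section
/- Let H be a complex Hilbert space, Q a bounded idempotent operator on H with P = I − Q, and let G : ℂ → B(H) be continuous (in operator norm) on a neighborhood U of 1 with G(1) invertible. Suppose A(z) = (P + (1 − z)·Q) ∘ G(z) for all z ∈ U. Then there is a punctured neighborhood of 1 on which A(z) is invertible with inverse A(z)^{-1} = G(z)^{-1} ∘ (P + (1 − z)^{-1}·Q), and the limit lim_{z→1, z≠1} (1 − z)·A(z)^{-1} exists in operator norm and equals G(1)^{-1} ∘ Q. -/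
open Filter
open scoped Topology

/-- If `A(z) = (P + (1 - z)Q) ∘ G(z)` on a neighborhood `U` of `1`, with `Q` a bounded
idempotent, `P = I - Q`, `G` continuous on `U` and `G(1)` invertible, then on a punctured
neighborhood of `1` the operator `A(z)` is invertible with
`A(z)⁻¹ = G(z)⁻¹ ∘ (P + (1-z)⁻¹ Q)` and `(1 - z)·A(z)⁻¹ → G(1)⁻¹ ∘ Q` as `z → 1`. -/
theorem stmt_9 {H : Type*} [NormedAddCommGroup H] [InnerProductSpace ℂ H]
    [CompleteSpace H] (Q : H →L[ℂ] H) (hQ : Q ∘L Q = Q)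
    (P : H →L[ℂ] H) (hP : P = 1 - Q) (G A : ℂ → H →L[ℂ] H)
    (U : Set ℂ) (hU : U ∈ 𝓝 (1 : ℂ)) (hGc : ContinuousOn G U)
    (hG1 : IsUnit (G 1)) (hA : ∀ z ∈ U, A z = (P + (1 - z) • Q) ∘L G z) :
    (∀ᶠ z in 𝓝[≠] (1 : ℂ),
        IsUnit (A z) ∧
          Ring.inverse (A z) = Ring.inverse (G z) ∘L (P + (1 - z)⁻¹ • Q)) ∧
      Tendsto (fun z : ℂ => (1 - z) • Ring.inverse (A z)) (𝓝[≠] (1 : ℂ))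
        (𝓝 (Ring.inverse (G 1) ∘L Q)) := by
  have hQmul : Q * Q = Q := hQ
  -- key algebraic identity
  have key : ∀ c : ℂ, c ≠ 0 → (P + c • Q) * (P + c⁻¹ • Q) = 1 ∧
      (P + c⁻¹ • Q) * (P + c • Q) = 1 := by
    intro c hc
    rw [hP]
    constructor <;>
    · simp only [sub_mul, mul_sub, add_mul, mul_add, smul_mul_assoc, mul_smul_comm,
        smul_smul, one_mul, mul_one, hQmul]
      simp only [sub_self, zero_add, smul_smul]
      first
        | rw [inv_mul_cancel₀ hc]
        | rw [mul_inv_cancel₀ hc]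
      module
  have hcont : ContinuousAt G 1 := hGc.continuousAt hU
  have hGunit : ∀ᶠ z in 𝓝 (1 : ℂ), IsUnit (G z) :=
    hcont.preimage_mem_nhds (Units.isOpen.mem_nhds hG1)
  have hev : ∀ᶠ z in 𝓝[≠] (1 : ℂ), z ∈ U ∧ IsUnit (G z) ∧ z ≠ 1 := by
    filter_upwards [nhdsWithin_le_nhds hU, nhdsWithin_le_nhds hGunit,
      self_mem_nhdsWithin] with z h1 h2 h3
    exact ⟨h1, h2, h3⟩
  -- main pointwise computation
  have main : ∀ z : ℂ, z ∈ U → IsUnit (G z) → z ≠ 1 →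
      IsUnit (A z) ∧
        Ring.inverse (A z) = Ring.inverse (G z) * (P + (1 - z)⁻¹ • Q) := by
    intro z hzU hGz hz1
    have hc : (1 - z : ℂ) ≠ 0 := sub_ne_zero.mpr (Ne.symm hz1)
    obtain ⟨g, hg⟩ := hGz
    set u : (H →L[ℂ] H)ˣ :=
      ⟨P + (1 - z) • Q, P + (1 - z)⁻¹ • Q, (key _ hc).1, (key _ hc).2⟩ with hu
    have hAz : A z = ↑(u * g) := by
      rw [hA z hzU, ← hg]; rfl
    refine ⟨hAz ▸ (u * g).isUnit, ?_⟩
    rw [hAz, Ring.inverse_unit, ← hg, Ring.inverse_unit]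
    rfl
  have hev' : ∀ᶠ z in 𝓝[≠] (1 : ℂ),
      IsUnit (A z) ∧
        Ring.inverse (A z) = Ring.inverse (G z) ∘L (P + (1 - z)⁻¹ • Q) := by
    filter_upwards [hev] with z ⟨h1, h2, h3⟩
    exact main z h1 h2 h3
  refine ⟨hev', ?_⟩
  -- the limit
  obtain ⟨g1, hg1⟩ := hG1
  have h1 : Tendsto (fun z => Ring.inverse (G z)) (𝓝 (1 : ℂ))
      (𝓝 (Ring.inverse (G 1))) := by
    have hinv : ContinuousAt Ring.inverse (G 1) := hg1 ▸ NormedRing.inverse_continuousAt g1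
    exact hinv.comp hcont
  have h2 : Tendsto (fun z : ℂ => (1 - z) • P + Q) (𝓝 (1 : ℂ)) (𝓝 ((1 - 1 : ℂ) • P + Q)) :=
    (((continuous_const.sub continuous_id).smul continuous_const).add continuous_const).tendsto 1
  have hlim : Tendsto (fun z : ℂ => Ring.inverse (G z) * ((1 - z) • P + Q)) (𝓝[≠] (1 : ℂ))
      (𝓝 (Ring.inverse (G 1) ∘L Q)) := by
    have := (h1.mul h2).mono_left (nhdsWithin_le_nhds : 𝓝[≠] (1:ℂ) ≤ 𝓝 1)
    simp at this
    exact this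
  refine Tendsto.congr' ?_ hlim
  filter_upwards [hev] with z ⟨h1', h2', h3'⟩
  have hc : (1 - z : ℂ) ≠ 0 := sub_ne_zero.mpr (Ne.symm h3')
  rw [(main z h1' h2' h3').2, ← mul_smul_comm, smul_add, smul_smul, mul_inv_cancel₀ hc,
    one_smul]
end
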